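/- Let L be a diffusion operator with carré du champ Γ, C: A → Aʳ a linear operator, and a: ℝ₊ → ℝ₊ an admissible function (C⁴, with 1/a'' positive and concave). Set Φf = a''(f)|Cf|². Then Γ_Φ(f) ≥ a''(f) Cf·[L,C]f for all f ∈ A₊ with Φf ∈ A₊. -/

import Mathlib

section Aux

lemma aux_antitone_deriv_nonpos {g : ℝ → ℝ} {g' t : ℝ}
    (hg : AntitoneOn g (Set.Ici (0:ℝ))) (ht : 0 ≤ t) (hd : HasDerivAt g g' t) :
    g' ≤ 0 := by
  have htend : Filter.Tendsto (slope g t) (nhdsWithin t (Set.Ioi t)) (nhds g') :=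
    ((hasDerivAt_iff_tendsto_slope).mp hd).mono_left
      (nhdsWithin_mono t (fun y hy => ne_of_gt hy))
  refine le_of_tendsto htend ?_
  filter_upwards [self_mem_nhdsWithin] with y hy
  have hy' : t < y := hy
  have hle : g y ≤ g t := hg ht (le_trans ht hy'.le) hy'.le
  rw [slope_def_field]
  exact div_nonpos_of_nonpos_of_nonneg (by linarith) (by linarith)

lemma aux_quad {A B Cc : ℝ} (hA : 0 ≤ A) (hC : 0 ≤ Cc)
    (h : ∀ m n : ℤ, 0 ≤ A * (m:ℝ)^2 + 2*B*(m:ℝ)*(n:ℝ) + Cc*(n:ℝ)^2) :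
    B^2 ≤ A * Cc := by
  have hq : ∀ q : ℚ, 0 ≤ A * ((q:ℝ)*(q:ℝ)) + (2*B) * (q:ℝ) + Cc := by
    intro q
    have key := h q.num q.den
    have hden : (0:ℝ) < (q.den:ℝ) := by exact_mod_cast q.pos
    have hcast : (q:ℝ) = (q.num:ℝ) / (q.den:ℝ) := by rw [Rat.cast_def]
    have h2 : 0 ≤ (A * (q.num:ℝ)^2 + 2*B*(q.num:ℝ)*(q.den:ℝ) + Cc*(q.den:ℝ)^2) / ((q.den:ℝ)^2) :=
      div_nonneg (by exact_mod_cast key) (by positivity)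
    calc (0:ℝ) ≤ _ := h2
    _ = A * ((q:ℝ)*(q:ℝ)) + (2*B) * (q:ℝ) + Cc := by
        rw [hcast]; field_simp
  have hr : ∀ t : ℝ, 0 ≤ A * (t*t) + (2*B) * t + Cc := by
    have hclosed : IsClosed {t : ℝ | 0 ≤ A * (t*t) + (2*B)*t + Cc} :=
      isClosed_le continuous_const (by continuity)
    have hsub : Set.range ((↑) : ℚ → ℝ) ⊆ {t : ℝ | 0 ≤ A * (t*t) + (2*B)*t + Cc} := by
      rintro _ ⟨q, rfl⟩; exact hq q
    intro t
    have hmem : t ∈ closure (Set.range ((↑) : ℚ → ℝ)) := by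
      rw [Rat.denseRange_cast.closure_eq]; trivial
    exact hclosed.closure_subset_iff.mpr hsub hmem
  have hd := discrim_le_zero hr
  rw [discrim] at hd
  nlinarith [hd]

lemma aux_per {b2 t G Gi Hi : ℝ} (hb2 : 0 < b2) (hG : 0 ≤ G) (hGi : 0 ≤ Gi)
    (hCS : Hi^2 ≤ G*Gi) : 0 ≤ 2*b2^2*Gi + 2*t^2*G + 4*b2*t*Hi := by
  rcases hG.eq_or_lt with h|h
  · have hH : Hi = 0 := by nlinarith [sq_nonneg Hi]
    rw [hH, ← h]; ring_nf; positivity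
  · nlinarith [sq_nonneg (b2*Hi + t*G), hCS, h, sq_nonneg b2]

lemma aux_conc (a : ℝ → ℝ) (ha : ContDiff ℝ 4 a)
    (ha'' : ∀ x : ℝ, 0 ≤ x → 0 < iteratedDeriv 2 a x)
    (hconc : ConcaveOn ℝ (Set.Ici (0:ℝ)) fun x => 1 / iteratedDeriv 2 a x)
    {t : ℝ} (ht : 0 ≤ t) :
    2 * (iteratedDeriv 3 a t)^2 ≤ iteratedDeriv 2 a t * iteratedDeriv 4 a t := by
  set A2 := iteratedDeriv 2 a with hA2def
  set A3 := iteratedDeriv 3 a with hA3def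
  set A4 := iteratedDeriv 4 a with hA4def
  have hA2c : ContDiff ℝ 2 A2 := by
    rw [hA2def, iteratedDeriv_eq_iterate]
    exact ha.iterate_deriv' 2 2
  have hA3c : ContDiff ℝ 1 A3 := by
    rw [hA3def, iteratedDeriv_eq_iterate]
    exact ha.iterate_deriv' 1 3
  have hd23 : deriv A2 = A3 := by rw [hA2def, hA3def, ← iteratedDeriv_succ]
  have hd34 : deriv A3 = A4 := by rw [hA3def, hA4def, ← iteratedDeriv_succ]
  have hA2diff : ∀ s : ℝ, DifferentiableAt ℝ A2 s := fun s =>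
    (hA2c.differentiable (by norm_num)).differentiableAt
  have hA3diff : ∀ s : ℝ, DifferentiableAt ℝ A3 s := fun s =>
    (hA3c.differentiable (by norm_num)).differentiableAt
  have hne : ∀ s : ℝ, 0 ≤ s → A2 s ≠ 0 := fun s hs => ne_of_gt (ha'' s hs)
  have hdA2 : ∀ s : ℝ, HasDerivAt A2 (A3 s) s := by
    intro s
    have h := (hA2diff s).hasDerivAt
    rwa [congrFun hd23 s] at h
  have hdA3 : ∀ s : ℝ, HasDerivAt A3 (A4 s) s := by
    intro s
    have h := (hA3diff s).hasDerivAt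
    rwa [congrFun hd34 s] at h
  set p : ℝ → ℝ := fun s => -(A3 s / (A2 s)^2) with hpdef
  have hderivα : ∀ s : ℝ, 0 ≤ s → HasDerivAt (fun x => 1 / A2 x) (p s) s := by
    intro s hs
    have h2 := (hdA2 s).inv (hne s hs)
    simp only [one_div]
    rw [show p s = -A3 s / A2 s ^ 2 by rw [hpdef]; rw [neg_div]]; exact h2
  have hanti : AntitoneOn (deriv fun x => 1 / A2 x) (Set.Ici (0:ℝ)) :=
    hconc.antitoneOn_deriv (fun s hs => (hderivα s hs).differentiableAt)
  have hantip : AntitoneOn p (Set.Ici (0:ℝ)) := by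
    intro x hx y hy hxy
    rw [← (hderivα x hx).deriv, ← (hderivα y hy).deriv]
    exact hanti hx hy hxy
  have hA2sq : HasDerivAt (fun s => (A2 s)^2) (2 * A2 t * A3 t) t := by
    have := (hdA2 t).pow 2
    exact this.congr_deriv (by norm_num)
  have hdiv : HasDerivAt (fun s => A3 s / (A2 s)^2)
      ((A4 t * (A2 t)^2 - A3 t * (2 * A2 t * A3 t)) / ((A2 t)^2)^2) t :=
    (hdA3 t).div hA2sq (pow_ne_zero _ (hne t ht))
  have hp' : HasDerivAt p (-((A4 t * (A2 t)^2 - A3 t * (2 * A2 t * A3 t)) / ((A2 t)^2)^2)) t :=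
    hdiv.neg
  have h0 := aux_antitone_deriv_nonpos hantip ht hp'
  have hposA2 := ha'' t ht
  have hqd : 0 ≤ (A4 t * (A2 t)^2 - A3 t * (2 * A2 t * A3 t)) / ((A2 t)^2)^2 := by linarith
  have hdpos : (0:ℝ) < ((A2 t)^2)^2 := by positivity
  have hq : 0 ≤ A4 t * (A2 t)^2 - A3 t * (2 * A2 t * A3 t) := by
    rw [le_div_iff₀ hdpos] at hqd; simpa using hqd
  nlinarith [hq, hposA2]

end Aux


/-- entropic `Φ`'s for diffusions. Let `L` be a diffusion operator
with (bilinear) carré du champ `Γb`, `C : A → Aʳ` a linear operator with components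
`C i`, and `a : ℝ₊ → ℝ₊` an admissible function (`C⁴` with `1/a''` positive concave).
For `Φ f = a''(f)|Cf|²` one has `Γ_Φ(f) ≥ a''(f) Cf·[L,C]f` for `f ∈ A₊` with `Φf ≥ 0`.
Here `Γ_Φ f = (L(Φ f) − dΦ(f)·Lf)/2` with
`dΦ(f)·Lf = a'''(f)·Lf·|Cf|² + 2a''(f) Cf·C(Lf)`. -/
theorem stmt8 {E : Type*} (L : (E → ℝ) → E → ℝ) (r : ℕ)
    (C : Fin r → (E → ℝ) → E → ℝ)
    (Γb : (E → ℝ) → (E → ℝ) → E → ℝ)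
    -- the carré du champ of `L`
    (hΓdef : ∀ f g : E → ℝ, ∀ x, Γb f g x = (L (f * g) x - g x * L f x - f x * L g x) / 2)
    (hΓpos : ∀ f : E → ℝ, ∀ x, 0 ≤ Γb f f x)
    (hLadd : ∀ f g : E → ℝ, L (f + g) = L f + L g)
    (hL0 : L 0 = 0)
    -- the diffusion (chain rule) property of `L`
    (hchain : ∀ u : ℝ → ℝ, ContDiff ℝ 2 u → ∀ f : E → ℝ, ∀ x,
      L (fun y => u (f y)) x = deriv u (f x) * L f x + deriv (deriv u) (f x) * Γb f f x)
    (hchainΓ : ∀ u : ℝ → ℝ, ContDiff ℝ 2 u → ∀ f g : E → ℝ, ∀ x,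
      Γb (fun y => u (f y)) g x = deriv u (f x) * Γb f g x)
    -- `a` is admissible: `C⁴` with `1/a''` positive concave on `ℝ₊`
    (a : ℝ → ℝ) (ha : ContDiff ℝ 4 a)
    (ha'' : ∀ x : ℝ, 0 ≤ x → 0 < iteratedDeriv 2 a x)
    (hconc : ConcaveOn ℝ (Set.Ici (0:ℝ)) fun x => 1 / iteratedDeriv 2 a x)
    -- `f ∈ A₊` with `Φ f ∈ A₊`
    (f : E → ℝ) (hf : ∀ x, 0 ≤ f x)
    (hΦf : ∀ x, 0 ≤ iteratedDeriv 2 a (f x) * ∑ i, (C i f x) ^ 2) :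
    ∀ x : E,
      iteratedDeriv 2 a (f x) * ∑ i, C i f x * (L (C i f) x - C i (L f) x)
        ≤ (L (fun y => iteratedDeriv 2 a (f y) * ∑ i, (C i f y) ^ 2) x
            - (iteratedDeriv 3 a (f x) * L f x * ∑ i, (C i f x) ^ 2
              + 2 * iteratedDeriv 2 a (f x) * ∑ i, C i f x * C i (L f) x)) / 2 := by
  classical
  -- basic operator identities
  have hΓsymm : ∀ g h : E → ℝ, ∀ x, Γb g h x = Γb h g x := by
    intro g h x
    rw [hΓdef g h x, hΓdef h g x, mul_comm g h]
    ring
  have hLmul : ∀ g h : E → ℝ, ∀ x,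
      L (g * h) x = g x * L h x + h x * L g x + 2 * Γb g h x := by
    intro g h x
    have := hΓdef g h x
    linarith
  have hΓaddR : ∀ g h k : E → ℝ, ∀ x, Γb g (h + k) x = Γb g h x + Γb g k x := by
    intro g h k x
    rw [hΓdef g (h+k) x, hΓdef g h x, hΓdef g k x, mul_add, hLadd, hLadd]
    simp only [Pi.add_apply]
    ring
  have hΓ0R : ∀ g : E → ℝ, ∀ x, Γb g 0 x = 0 := by
    intro g x
    rw [hΓdef, mul_zero, hL0]
    simp
  have hLsum : ∀ (s : Finset (Fin r)) (g : Fin r → E → ℝ),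
      L (∑ i ∈ s, g i) = ∑ i ∈ s, L (g i) := by
    intro s g
    induction s using Finset.induction_on with
    | empty => simpa using hL0
    | insert _ _ hnotmem ih =>
        rw [Finset.sum_insert hnotmem, hLadd, ih, Finset.sum_insert hnotmem]
  have hΓsumR : ∀ (g : E → ℝ) (s : Finset (Fin r)) (h : Fin r → E → ℝ) (x : E),
      Γb g (∑ i ∈ s, h i) x = ∑ i ∈ s, Γb g (h i) x := by
    intro g s h x
    induction s using Finset.induction_on with
    | empty => simpa using hΓ0R g x
    | insert _ _ hnotmem ih =>
        rw [Finset.sum_insert hnotmem, hΓaddR, ih, Finset.sum_insert hnotmem]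
  have hLneg : ∀ g : E → ℝ, L (-g) = -L g := by
    intro g
    have h := hLadd g (-g)
    rw [show g + -g = (0 : E → ℝ) by simp, hL0] at h
    funext x
    have := congrFun h x
    simp only [Pi.add_apply, Pi.zero_apply, Pi.neg_apply] at this ⊢
    linarith
  have hLz : ∀ (z : ℤ) (g : E → ℝ), L (z • g) = z • L g := by
    intro z g
    induction z using Int.induction_on with
    | zero => simpa using hL0
    | succ k ih =>
        rw [show ((k:ℤ)+1) • g = (k:ℤ) • g + g by rw [add_zsmul, one_zsmul],
          hLadd, ih, add_zsmul, one_zsmul]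
    | pred k ih =>
        have hsm : ∀ h : E → ℝ, (-(k:ℤ)-1) • h = (-(k:ℤ)) • h + -h := fun h => by
          rw [sub_zsmul, one_zsmul]
          try exact sub_eq_add_neg _ _
        rw [hsm g, hLadd, ih, hLneg, hsm (L g)]
  have hΓzR : ∀ (z : ℤ) (g h : E → ℝ) (x : E), Γb g (z • h) x = (z:ℝ) * Γb g h x := by
    intro z g h x
    rw [hΓdef g (z • h) x, hΓdef g h x, mul_smul_comm, hLz, hLz]
    simp only [Pi.smul_apply, zsmul_eq_mul]
    push_cast
    ring
  -- Cauchy-Schwarz for Γ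
  have hCS : ∀ g h : E → ℝ, ∀ x, (Γb g h x)^2 ≤ Γb g g x * Γb h h x := by
    intro g h x
    apply aux_quad (hΓpos g x) (hΓpos h x)
    intro m n
    have h0 := hΓpos (m • g + n • h) x
    have t1 : Γb (m • g + n • h) (m • g + n • h) x
        = Γb (m • g + n • h) (m • g) x + Γb (m • g + n • h) (n • h) x := hΓaddR _ _ _ x
    have t2 : Γb (m • g + n • h) (m • g) x = (m:ℝ) * Γb (m • g + n • h) g x := hΓzR _ _ _ x
    have t3 : Γb (m • g + n • h) (n • h) x = (n:ℝ) * Γb (m • g + n • h) h x := hΓzR _ _ _ x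
    have t4 : Γb (m • g + n • h) g x = Γb g (m • g + n • h) x := hΓsymm _ _ x
    have t5 : Γb (m • g + n • h) h x = Γb h (m • g + n • h) x := hΓsymm _ _ x
    have t6 : Γb g (m • g + n • h) x = (m:ℝ) * Γb g g x + (n:ℝ) * Γb g h x := by
      rw [hΓaddR, hΓzR, hΓzR]
    have t7 : Γb h (m • g + n • h) x = (m:ℝ) * Γb h g x + (n:ℝ) * Γb h h x := by
      rw [hΓaddR, hΓzR, hΓzR]
    rw [t1, t2, t3, t4, t5, t6, t7, hΓsymm h g x] at h0
    exact h0.trans_eq (by ring)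
  intro x
  -- notation
  have hb2pos : 0 < iteratedDeriv 2 a (f x) := ha'' (f x) (hf x)
  have hb4 : 2 * (iteratedDeriv 3 a (f x))^2
      ≤ iteratedDeriv 2 a (f x) * iteratedDeriv 4 a (f x) := aux_conc a ha ha'' hconc (hf x)
  have hG : 0 ≤ Γb f f x := hΓpos f x
  -- derivative identifications
  have e3 : deriv (iteratedDeriv 2 a) = iteratedDeriv 3 a := by rw [← iteratedDeriv_succ]
  have e4 : deriv (iteratedDeriv 3 a) = iteratedDeriv 4 a := by rw [← iteratedDeriv_succ]
  have hu2 : ContDiff ℝ 2 (iteratedDeriv 2 a) := by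
    rw [iteratedDeriv_eq_iterate]
    exact ha.iterate_deriv' 2 2
  have hsqc : ContDiff ℝ 2 (fun s : ℝ => s^2) := by fun_prop
  have hderiv_sq : deriv (fun s : ℝ => s^2) = fun s => 2*s := by
    funext s
    simp [deriv_pow]
  have hderiv_sq2 : deriv (deriv (fun s : ℝ => s^2)) = fun _ => 2 := by
    rw [hderiv_sq]
    funext s
    have h : HasDerivAt (fun s : ℝ => 2*s) (2*1) s := (hasDerivAt_id s).const_mul 2
    simpa using h.deriv
  -- the main decomposition
  set S : E → ℝ := fun y => ∑ i, (C i f y)^2 with hSdef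
  set g2 : E → ℝ := fun y => iteratedDeriv 2 a (f y) with hg2def
  have hLΦ : L (fun y => iteratedDeriv 2 a (f y) * ∑ i, (C i f y)^2) x
      = g2 x * L S x + S x * L g2 x + 2 * Γb g2 S x := hLmul g2 S x
  have hLg2 : L g2 x = iteratedDeriv 3 a (f x) * L f x
      + iteratedDeriv 4 a (f x) * Γb f f x := by
    have h := hchain (iteratedDeriv 2 a) hu2 f x
    rw [e3, e4] at h
    exact h
  have hSsum : S = ∑ i, (fun y => (C i f y)^2) := by
    funext y
    rw [Finset.sum_apply]
  have hLS : L S x = ∑ i, (2 * C i f x * L (C i f) x + 2 * Γb (C i f) (C i f) x) := by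
    rw [hSsum, hLsum Finset.univ, Finset.sum_apply]
    refine Finset.sum_congr rfl fun i _ => ?_
    have h := hchain (fun s : ℝ => s^2) hsqc (C i f) x
    rw [hderiv_sq2] at h
    simp only [hderiv_sq] at h
    exact h.trans (by ring)
  have hΓg2S : Γb g2 S x = iteratedDeriv 3 a (f x) * Γb f S x := by
    have h := hchainΓ (iteratedDeriv 2 a) hu2 f S x
    rw [e3] at h
    exact h
  have hΓfS : Γb f S x = ∑ i, 2 * C i f x * Γb f (C i f) x := by
    rw [hSsum, hΓsumR f Finset.univ]
    refine Finset.sum_congr rfl fun i _ => ?_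
    rw [hΓsymm f _ x]
    have h := hchainΓ (fun s : ℝ => s^2) hsqc (C i f) f x
    simp only [hderiv_sq] at h
    rw [h, hΓsymm (C i f) f x]
  -- key positivity
  have hSx : 0 ≤ S x := by
    rw [hSdef]
    exact Finset.sum_nonneg fun i _ => sq_nonneg _
  have hper : ∀ i ∈ Finset.univ (α := Fin r), 0 ≤
      2*(iteratedDeriv 2 a (f x))^2*(Γb (C i f) (C i f) x)
      + 2*((iteratedDeriv 3 a (f x))*(C i f x))^2*(Γb f f x)
      + 4*(iteratedDeriv 2 a (f x))*((iteratedDeriv 3 a (f x))*(C i f x))*(Γb f (C i f) x) :=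
    fun i _ => aux_per hb2pos hG (hΓpos (C i f) x) (hCS f (C i f) x)
  have hsum := Finset.sum_nonneg hper
  have hexp : ∑ i : Fin r, (2*(iteratedDeriv 2 a (f x))^2*(Γb (C i f) (C i f) x)
      + 2*((iteratedDeriv 3 a (f x))*(C i f x))^2*(Γb f f x)
      + 4*(iteratedDeriv 2 a (f x))*((iteratedDeriv 3 a (f x))*(C i f x))*(Γb f (C i f) x))
      = 2*(iteratedDeriv 2 a (f x))^2 * (∑ i, Γb (C i f) (C i f) x)
      + 2*(iteratedDeriv 3 a (f x))^2*(Γb f f x) * (∑ i, (C i f x)^2)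
      + 4*(iteratedDeriv 2 a (f x))*(iteratedDeriv 3 a (f x)) * (∑ i, C i f x * Γb f (C i f) x) := by
    rw [Finset.mul_sum, Finset.mul_sum, Finset.mul_sum, ← Finset.sum_add_distrib,
      ← Finset.sum_add_distrib]
    refine Finset.sum_congr rfl fun i _ => ?_
    ring
  rw [hexp] at hsum
  have hΓi : 0 ≤ ∑ i : Fin r, Γb (C i f) (C i f) x :=
    Finset.sum_nonneg fun i _ => hΓpos (C i f) x
  have hprod : 0 ≤ (iteratedDeriv 2 a (f x) * iteratedDeriv 4 a (f x)
      - 2*(iteratedDeriv 3 a (f x))^2) * ((∑ i, (C i f x)^2) * Γb f f x) :=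
    mul_nonneg (sub_nonneg.mpr hb4)
      (mul_nonneg (Finset.sum_nonneg fun i _ => sq_nonneg _) hG)
  have hKb2 : 0 ≤ iteratedDeriv 2 a (f x) *
      (2*(iteratedDeriv 2 a (f x)) * (∑ i, Γb (C i f) (C i f) x)
        + iteratedDeriv 4 a (f x) * (∑ i, (C i f x)^2) * Γb f f x
        + 4*(iteratedDeriv 3 a (f x)) * (∑ i, C i f x * Γb f (C i f) x)) := by
    nlinarith [hsum, hprod]
  have key : 0 ≤ 2*(iteratedDeriv 2 a (f x)) * (∑ i, Γb (C i f) (C i f) x)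
      + iteratedDeriv 4 a (f x) * (∑ i, (C i f x)^2) * Γb f f x
      + 4*(iteratedDeriv 3 a (f x)) * (∑ i, C i f x * Γb f (C i f) x) := by
    by_contra hcon
    push_neg at hcon
    nlinarith [hKb2, hb2pos, hcon]
  -- expand sums in goal
  have e5 : ∑ i : Fin r, C i f x * (L (C i f) x - C i (L f) x)
      = (∑ i, C i f x * L (C i f) x) - ∑ i, C i f x * C i (L f) x := by
    rw [← Finset.sum_sub_distrib]
    exact Finset.sum_congr rfl fun i _ => by ring
  have e6 : ∑ i : Fin r, (2 * C i f x * L (C i f) x + 2 * Γb (C i f) (C i f) x)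
      = 2 * (∑ i, C i f x * L (C i f) x) + 2 * ∑ i, Γb (C i f) (C i f) x := by
    rw [Finset.mul_sum, Finset.mul_sum, ← Finset.sum_add_distrib]
    exact Finset.sum_congr rfl fun i _ => by ring
  have e7 : ∑ i : Fin r, 2 * C i f x * Γb f (C i f) x
      = 2 * ∑ i, C i f x * Γb f (C i f) x := by
    rw [Finset.mul_sum]
    exact Finset.sum_congr rfl fun i _ => by ring
  rw [hLΦ, hLg2, hLS, hΓg2S, hΓfS, e5, e6, e7]
  have hg2x : g2 x = iteratedDeriv 2 a (f x) := rfl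
  have hSxval : S x = ∑ i, (C i f x)^2 := rfl
  rw [hg2x, hSxval]
  linarith [key]
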